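/- If N_δ i.i.d. samples δ_1,...,δ_{N_δ} are drawn from a probability distribution P on Δ, and h* = max_{i=1,...,N_δ} f(δ_i) for a measurable function f : Δ → ℝ, then for any ε ∈ (0,1), the probability (over the N_δ samples) that P{δ : f(δ) > h*} > ε is at most (1-ε)^{N_δ}. -/

import Mathlib

open MeasureTheory

/-- Scenario guarantee, d = 1: the probability (over N i.i.d. samples) that the
violation probability of `h* = max_i f(δ_i)` exceeds `ε` is at most `(1-ε)^N`. -/
theorem scenario_bound_max
    {Δ : Type*} [MeasurableSpace Δ] (P : Measure Δ) [IsProbabilityMeasure P]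
    (f : Δ → ℝ) (hf : Measurable f) (N : ℕ) (hN : 0 < N)
    (ε : ℝ) (hε : ε ∈ Set.Ioo (0 : ℝ) 1) :
    (Measure.pi (fun _ : Fin N => P))
      {ω : Fin N → Δ |
        ENNReal.ofReal ε <
          P {δ | f δ > Finset.univ.sup' (Finset.univ_nonempty_iff.mpr ⟨⟨0, hN⟩⟩)
              (fun i => f (ω i))}}
      ≤ ENNReal.ofReal ((1 - ε) ^ N) := by
  obtain ⟨hε0, hε1⟩ := hε
  set ε' := ENNReal.ofReal ε with hε'def
  set G : ℝ → ENNReal := fun t => P {δ | f δ > t} with hGdef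
  have hGmeas : ∀ t : ℝ, MeasurableSet {δ | f δ > t} := fun t =>
    measurableSet_lt measurable_const hf
  have hGmono : ∀ {s t : ℝ}, s ≤ t → G t ≤ G s := fun {s t} h =>
    measure_mono (fun δ hδ => lt_of_le_of_lt h hδ)
  by_cases hS : ∃ s : ℝ, ε' < G s
  · obtain ⟨s₀, hs₀⟩ := hS
    set S := {t : ℝ | G t ≤ ε'} with hSdef
    -- S is nonempty
    have hSne : S.Nonempty := by
      have hinter : (⋂ n : ℕ, {δ | f δ > (n : ℝ)}) = ∅ := by
        ext δ
        simp only [Set.mem_iInter, Set.mem_empty_iff_false, iff_false, not_forall]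
        obtain ⟨n, hn⟩ := exists_nat_gt (f δ)
        exact ⟨n, not_lt.2 hn.le⟩
      have hdir : Directed (· ⊇ ·) (fun n : ℕ => {δ | f δ > (n : ℝ)}) := by
        intro a b
        refine ⟨max a b, fun δ hδ => ?_, fun δ hδ => ?_⟩ <;>
          simp only [Set.mem_setOf_eq] at hδ ⊢
        · have h1 : (a : ℝ) ≤ (max a b : ℕ) := by exact_mod_cast le_max_left a b
          linarith
        · have h1 : (b : ℝ) ≤ (max a b : ℕ) := by exact_mod_cast le_max_right a b
          linarith
      have h0 : (⨅ n : ℕ, G (n : ℝ)) = 0 := by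
        rw [hGdef]
        simp only
        rw [← Directed.measure_iInter (fun n => (hGmeas _).nullMeasurableSet) hdir
          ⟨0, measure_ne_top P _⟩, hinter, measure_empty]
      have hlt : (⨅ n : ℕ, G (n : ℝ)) < ε' := by
        rw [h0]; exact ENNReal.ofReal_pos.2 hε0
      obtain ⟨n, hn⟩ := iInf_lt_iff.1 hlt
      exact ⟨n, hn.le⟩
    have hbdd : BddBelow S := by
      refine ⟨s₀, fun t ht => ?_⟩
      by_contra h
      push_neg at h
      exact absurd (le_trans (hGmono h.le) ht) (not_le.2 hs₀)
    set t₀ := sInf S with ht₀def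
    -- (a) t₀ ∈ S
    have ht₀S : G t₀ ≤ ε' := by
      have hU : {δ | f δ > t₀} = ⋃ n : ℕ, {δ | f δ > t₀ + 1 / (n + 1)} := by
        ext δ
        simp only [Set.mem_setOf_eq, Set.mem_iUnion]
        constructor
        · intro h
          obtain ⟨n, hn⟩ := exists_nat_one_div_lt (sub_pos.2 h)
          exact ⟨n, by push_cast at hn ⊢; linarith⟩
        · rintro ⟨n, hn⟩
          have hp : (0 : ℝ) < 1 / ((n : ℝ) + 1) := by positivity
          linarith
      have hdir : Directed (· ⊆ ·) (fun n : ℕ => {δ | f δ > t₀ + 1 / ((n : ℝ) + 1)}) := by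
        intro a b
        refine ⟨max a b, fun δ hδ => ?_, fun δ hδ => ?_⟩ <;>
          simp only [Set.mem_setOf_eq] at hδ ⊢
        · have h1 : (1 : ℝ) / ((max a b : ℕ) + 1) ≤ 1 / ((a : ℝ) + 1) := by
            apply one_div_le_one_div_of_le (by positivity)
            have : (a : ℝ) ≤ (max a b : ℕ) := by exact_mod_cast le_max_left a b
            linarith
          linarith
        · have h1 : (1 : ℝ) / ((max a b : ℕ) + 1) ≤ 1 / ((b : ℝ) + 1) := by
            apply one_div_le_one_div_of_le (by positivity)
            have : (b : ℝ) ≤ (max a b : ℕ) := by exact_mod_cast le_max_right a b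
            linarith
          linarith
      have hsup : G t₀ = ⨆ n : ℕ, G (t₀ + 1 / ((n : ℝ) + 1)) := by
        rw [hGdef]
        simp only
        rw [hU, Directed.measure_iUnion hdir]
      rw [hsup]
      refine iSup_le fun n => ?_
      have hpos : (0 : ℝ) < 1 / ((n : ℝ) + 1) := by positivity
      obtain ⟨s, hsS, hs⟩ := (csInf_lt_iff hbdd hSne).1
        (show sInf S < t₀ + 1 / ((n : ℝ) + 1) by rw [← ht₀def]; linarith)
      exact le_trans (hGmono hs.le) hsS
    -- (b) ε' ≤ P {δ | t₀ ≤ f δ}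
    have hge : ε' ≤ P {δ | t₀ ≤ f δ} := by
      have hI : {δ | t₀ ≤ f δ} = ⋂ n : ℕ, {δ | f δ > t₀ - 1 / ((n : ℝ) + 1)} := by
        ext δ
        simp only [Set.mem_setOf_eq, Set.mem_iInter]
        constructor
        · intro h n
          have hp : (0 : ℝ) < 1 / ((n : ℝ) + 1) := by positivity
          linarith
        · intro h
          by_contra hlt
          push_neg at hlt
          obtain ⟨n, hn⟩ := exists_nat_one_div_lt (sub_pos.2 hlt)
          have h2 := h n
          push_cast at hn h2
          linarith
      have hdir : Directed (· ⊇ ·) (fun n : ℕ => {δ | f δ > t₀ - 1 / ((n : ℝ) + 1)}) := by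
        intro a b
        refine ⟨max a b, fun δ hδ => ?_, fun δ hδ => ?_⟩ <;>
          simp only [Set.mem_setOf_eq] at hδ ⊢
        · have h1 : (1 : ℝ) / ((max a b : ℕ) + 1) ≤ 1 / ((a : ℝ) + 1) := by
            apply one_div_le_one_div_of_le (by positivity)
            have : (a : ℝ) ≤ (max a b : ℕ) := by exact_mod_cast le_max_left a b
            linarith
          linarith
        · have h1 : (1 : ℝ) / ((max a b : ℕ) + 1) ≤ 1 / ((b : ℝ) + 1) := by
            apply one_div_le_one_div_of_le (by positivity)
            have : (b : ℝ) ≤ (max a b : ℕ) := by exact_mod_cast le_max_right a b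
            linarith
          linarith
      have hinf : P {δ | t₀ ≤ f δ} = ⨅ n : ℕ, G (t₀ - 1 / ((n : ℝ) + 1)) := by
        rw [hI, Directed.measure_iInter (fun n => (hGmeas _).nullMeasurableSet) hdir
          ⟨0, measure_ne_top P _⟩]
      rw [hinf]
      refine le_iInf fun n => ?_
      have hpos : (0 : ℝ) < 1 / ((n : ℝ) + 1) := by positivity
      have hnot : t₀ - 1 / ((n : ℝ) + 1) ∉ S := fun hmem =>
        absurd (csInf_le hbdd hmem) (not_le.2 (by rw [← ht₀def]; linarith))
      exact (not_le.1 hnot).le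
    -- (c) inclusion into a product set
    set B := {δ | f δ < t₀} with hBdef
    have hsub : {ω : Fin N → Δ |
        ENNReal.ofReal ε <
          P {δ | f δ > Finset.univ.sup' (Finset.univ_nonempty_iff.mpr ⟨⟨0, hN⟩⟩)
              (fun i => f (ω i))}} ⊆ Set.univ.pi (fun _ : Fin N => B) := by
      intro ω hω
      simp only [Set.mem_setOf_eq] at hω
      set h := Finset.univ.sup' (Finset.univ_nonempty_iff.mpr ⟨⟨0, hN⟩⟩)
          (fun i => f (ω i)) with hhdef
      have hhS : h ∉ S := fun hmem => absurd (lt_of_lt_of_le hω hmem) (lt_irrefl _)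
      have hht : h < t₀ := by
        by_contra hle
        push_neg at hle
        exact hhS (le_trans (hGmono hle) ht₀S)
      intro i _
      have hle : f (ω i) ≤ h := by
        rw [hhdef]; exact Finset.le_sup' (fun j => f (ω j)) (Finset.mem_univ i)
      exact lt_of_le_of_lt hle hht
    -- bound P B
    have hPB : P B ≤ ENNReal.ofReal (1 - ε) := by
      have hcompl : B = {δ | t₀ ≤ f δ}ᶜ := by
        ext δ; simp [hBdef, not_le]
      rw [hcompl, measure_compl (measurableSet_le measurable_const hf) (measure_ne_top P _),
        measure_univ, ENNReal.ofReal_sub _ hε0.le, ENNReal.ofReal_one]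
      exact tsub_le_tsub_left hge 1
    have hpow : (P B) ^ N ≤ ENNReal.ofReal ((1 - ε) ^ N) := by
      rw [ENNReal.ofReal_pow (by linarith : (0 : ℝ) ≤ 1 - ε)]
      exact pow_le_pow_left' hPB N
    refine le_trans (measure_mono hsub) ?_
    rw [Measure.pi_pi]
    simpa [Finset.prod_const, Finset.card_univ] using hpow
  · push_neg at hS
    have hempty : {ω : Fin N → Δ |
        ENNReal.ofReal ε <
          P {δ | f δ > Finset.univ.sup' (Finset.univ_nonempty_iff.mpr ⟨⟨0, hN⟩⟩)
              (fun i => f (ω i))}} = ∅ := by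
      ext ω
      simp only [Set.mem_setOf_eq, Set.mem_empty_iff_false, iff_false, not_lt]
      exact hS _
    rw [hempty, measure_empty]
    exact zero_le
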